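/- Let D be a d×d complex matrix with 0 ≤ D ≤ 1 in the Loewner order and tr(D) ≤ 1, and let q₁, q₂ be orthogonal projections in M_d(ℂ) with tr(D q₁) = 1 − ε₁ and tr(D q₂) = 1 − ε₂ (note ε₂ ≥ 0 automatically). Then tr(D q₂ q₁ q₂) ≥ 1 − ε₁ − 2·√ε₂. (In particular tr(D q₂ q₁ q₂) is a nonnegative real number since q₂ q₁ q₂ ≥ 0.) -/

import Mathlib

open scoped ComplexOrder
open Matrix

section Aux

variable {d : ℕ}

/-- Trace of a PSD matrix is nonnegative (in the complex order). -/
lemma aux_psd_trace_nonneg {A : Matrix (Fin d) (Fin d) ℂ} (hA : A.PosSemidef) :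
    (0 : ℂ) ≤ A.trace := by
  rw [Matrix.trace]
  apply Finset.sum_nonneg
  intro i _
  have h := hA.dotProduct_mulVec_nonneg (Pi.single i 1)
  simpa [dotProduct, Matrix.mulVec, Pi.single_apply, Finset.mul_sum] using h

/-- A Hermitian idempotent is PSD. -/
lemma aux_proj_psd {q : Matrix (Fin d) (Fin d) ℂ} (hherm : q.IsHermitian) (hidem : q * q = q) :
    q.PosSemidef := by
  have h := Matrix.posSemidef_conjTranspose_mul_self q
  rwa [hherm.eq, hidem] at h

lemma aux_trace_sq_re (X : Matrix (Fin d) (Fin d) ℂ) :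
    (X * Xᴴ).trace.re = ∑ p : Fin d × Fin d, ‖X p.1 p.2‖ ^ 2 := by
  rw [Matrix.trace, Complex.re_sum, Fintype.sum_prod_type]
  congr 1; ext i
  rw [Matrix.diag_apply, Matrix.mul_apply, Complex.re_sum]
  congr 1; ext j
  rw [Matrix.conjTranspose_apply]
  simp only [RCLike.star_def, Complex.mul_conj, Complex.ofReal_re]
  rw [Complex.normSq_eq_norm_sq]

/-- Cauchy–Schwarz for the trace inner product. -/
lemma aux_trace_cs (X Y : Matrix (Fin d) (Fin d) ℂ) :
    ‖(X * Y).trace‖ ≤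
      Real.sqrt ((X * Xᴴ).trace.re) * Real.sqrt ((Y * Yᴴ).trace.re) := by
  have h1 : ‖(X * Y).trace‖ ≤
      ∑ p : Fin d × Fin d, ‖X p.1 p.2‖ * ‖Y p.2 p.1‖ := by
    calc ‖(X * Y).trace‖
        = ‖∑ p : Fin d × Fin d, X p.1 p.2 * Y p.2 p.1‖ := by
          rw [Matrix.trace, Fintype.sum_prod_type]
          simp [Matrix.diag_apply, Matrix.mul_apply]
      _ ≤ ∑ p : Fin d × Fin d, ‖X p.1 p.2 * Y p.2 p.1‖ :=
          norm_sum_le _ _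
      _ = ∑ p : Fin d × Fin d, ‖X p.1 p.2‖ * ‖Y p.2 p.1‖ := by
          simp [_root_.map_mul]
  have h2 := Real.sum_mul_le_sqrt_mul_sqrt (Finset.univ : Finset (Fin d × Fin d))
      (fun p => ‖X p.1 p.2‖) (fun p => ‖Y p.2 p.1‖)
  have h3 : ∑ p : Fin d × Fin d, ‖Y p.2 p.1‖ ^ 2 = ∑ p : Fin d × Fin d, ‖Y p.1 p.2‖ ^ 2 :=
    Fintype.sum_equiv (Equiv.prodComm _ _) _ _ (fun p => rfl)
  rw [aux_trace_sq_re, aux_trace_sq_re]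
  calc ‖(X * Y).trace‖ ≤ _ := h1
    _ ≤ _ := h2
    _ = _ := by rw [h3]

end Aux

/-- Lemma "gentle-pinching" part 1: if `0 ≤ D ≤ 1` with `tr D ≤ 1` and `q₁, q₂` are orthogonal
projections with `tr (D q₁) = 1 - ε₁`, `tr (D q₂) = 1 - ε₂`, then
`tr (D q₂ q₁ q₂) ≥ 1 - ε₁ - 2 √ε₂` (a nonnegative real number). -/
theorem trace_pinching_bound {d : ℕ} (D q₁ q₂ : Matrix (Fin d) (Fin d) ℂ) (ε₁ ε₂ : ℝ)
    (hD : D.PosSemidef) (hD1 : ((1 : Matrix (Fin d) (Fin d) ℂ) - D).PosSemidef)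
    (htrD : D.trace.re ≤ 1)
    (hq₁herm : q₁.IsHermitian) (hq₁idem : q₁ * q₁ = q₁)
    (hq₂herm : q₂.IsHermitian) (hq₂idem : q₂ * q₂ = q₂)
    (h1 : (D * q₁).trace = ((1 - ε₁ : ℝ) : ℂ))
    (h2 : (D * q₂).trace = ((1 - ε₂ : ℝ) : ℂ)) :
    (D * q₂ * q₁ * q₂).trace.im = 0 ∧
      1 - ε₁ - 2 * Real.sqrt ε₂ ≤ (D * q₂ * q₁ * q₂).trace.re := by
  -- square root of D
  set R := (open scoped MatrixOrder in CFC.sqrt D) with hRdef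
  have hRR : R * R = D := by open scoped MatrixOrder in exact CFC.sqrt_mul_sqrt_self D hD.nonneg
  have hRH : Rᴴ = R := by open scoped MatrixOrder in exact (CFC.sqrt_nonneg D).posSemidef.1
  -- complementary projections
  have hp₁herm : ((1 : Matrix (Fin d) (Fin d) ℂ) - q₁).IsHermitian := by
    unfold Matrix.IsHermitian
    rw [Matrix.conjTranspose_sub, Matrix.conjTranspose_one, hq₁herm.eq]
  have hp₁idem : ((1 : Matrix (Fin d) (Fin d) ℂ) - q₁) * (1 - q₁) = 1 - q₁ := by
    simp [Matrix.mul_sub, Matrix.sub_mul, hq₁idem]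
  have hp₂herm : ((1 : Matrix (Fin d) (Fin d) ℂ) - q₂).IsHermitian := by
    unfold Matrix.IsHermitian
    rw [Matrix.conjTranspose_sub, Matrix.conjTranspose_one, hq₂herm.eq]
  have hp₂idem : ((1 : Matrix (Fin d) (Fin d) ℂ) - q₂) * (1 - q₂) = 1 - q₂ := by
    simp [Matrix.mul_sub, Matrix.sub_mul, hq₂idem]
  -- conjugating a PSD matrix by R gives nonnegative trace
  have key : ∀ A : Matrix (Fin d) (Fin d) ℂ, A.PosSemidef → (0 : ℂ) ≤ (R * A * R).trace := by
    intro A hA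
    have h := hA.conjTranspose_mul_mul_same R
    rw [hRH] at h
    exact aux_psd_trace_nonneg h
  -- trace D (1 - q₂) is between 0 and ε₂
  have hq₂cycle : (D * (1 - q₂)).trace = (R * (1 - q₂) * R).trace := by
    rw [← hRR, Matrix.mul_assoc, Matrix.trace_mul_comm R (R * (1 - q₂))]
  have he₂0 : (0 : ℂ) ≤ (D * (1 - q₂)).trace := hq₂cycle ▸ key _ (aux_proj_psd hp₂herm hp₂idem)
  have htr2 : (D * (1 - q₂)).trace = D.trace - ((1 - ε₂ : ℝ) : ℂ) := by
    rw [Matrix.mul_sub, Matrix.mul_one, Matrix.trace_sub, h2]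
  have he₂re : (D * (1 - q₂)).trace.re ≤ ε₂ := by
    rw [htr2]; simp only [Complex.sub_re, Complex.ofReal_re]; linarith
  have he₂re0 : 0 ≤ (D * (1 - q₂)).trace.re := ((Complex.le_def).1 he₂0).1
  -- 1 - ε₁ ≤ 1
  have hq₁cycle : (D * (1 - q₁)).trace = (R * (1 - q₁) * R).trace := by
    rw [← hRR, Matrix.mul_assoc, Matrix.trace_mul_comm R (R * (1 - q₁))]
  have he₁0 : (0 : ℂ) ≤ (D * (1 - q₁)).trace := hq₁cycle ▸ key _ (aux_proj_psd hp₁herm hp₁idem)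
  have he₁ : (1 : ℝ) - ε₁ ≤ 1 := by
    have := ((Complex.le_def).1 he₁0).1
    rw [Matrix.mul_sub, Matrix.mul_one, Matrix.trace_sub, h1] at this
    simp only [Complex.sub_re, Complex.ofReal_re, Complex.zero_re] at this
    linarith
  -- S := trace of D q₂ q₁ q₂, as conjugated trace
  set A : Matrix (Fin d) (Fin d) ℂ := q₂ * q₁ * q₂ with hAdef
  have hApsd : A.PosSemidef := by
    have h := (aux_proj_psd hq₁herm hq₁idem).conjTranspose_mul_mul_same q₂
    rw [hq₂herm.eq] at h
    exact hAdef ▸ h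
  have hScycle : (D * q₂ * q₁ * q₂).trace = (R * A * R).trace := by
    rw [hAdef,
      show D * q₂ * q₁ * q₂ = R * (R * (q₂ * q₁ * q₂)) by rw [← hRR]; noncomm_ring,
      Matrix.trace_mul_comm]
  have hS0 : (0 : ℂ) ≤ (D * q₂ * q₁ * q₂).trace := hScycle ▸ key _ hApsd
  have hSim : (D * q₂ * q₁ * q₂).trace.im = 0 := ((Complex.le_def).1 hS0).2.symm
  -- S ≤ 1 : 1 - A is PSD
  have h1A : ((1 : Matrix (Fin d) (Fin d) ℂ) - A).PosSemidef := by
    have hsplit : (1 : Matrix (Fin d) (Fin d) ℂ) - A = (1 - q₂) + q₂ * (1 - q₁) * q₂ := by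
      rw [hAdef]
      simp [Matrix.mul_sub, Matrix.sub_mul, Matrix.mul_one, hq₂idem]
    rw [hsplit]
    refine (aux_proj_psd hp₂herm hp₂idem).add ?_
    have h := (aux_proj_psd hp₁herm hp₁idem).conjTranspose_mul_mul_same q₂
    rwa [hq₂herm.eq] at h
  have hS1 : (D * q₂ * q₁ * q₂).trace.re ≤ 1 := by
    have h := key _ h1A
    rw [Matrix.mul_sub, Matrix.mul_one, Matrix.sub_mul, Matrix.trace_sub, hRR] at h
    have := ((Complex.le_def).1 h).1
    rw [hScycle]
    simp only [Complex.sub_re, Complex.zero_re] at this ⊢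
    linarith
  -- decompose: D q₂ q₁ q₂ = D q₁ - D (1-q₂) q₁ - D q₂ q₁ (1-q₂)
  have hdecomp : (D * q₂ * q₁ * q₂).trace
      = (D * q₁).trace - (D * (1 - q₂) * q₁).trace - (D * q₂ * q₁ * (1 - q₂)).trace := by
    rw [← Matrix.trace_sub, ← Matrix.trace_sub]
    congr 1
    noncomm_ring
  -- Cauchy-Schwarz bound for the first error term
  have ht1 : ‖(D * (1 - q₂) * q₁).trace‖ ≤ Real.sqrt ε₂ := by
    have hXY : (q₁ * R) * (R * (1 - q₂)) = q₁ * (D * (1 - q₂)) := by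
      rw [← hRR]; noncomm_ring
    have hcs := aux_trace_cs (q₁ * R) (R * (1 - q₂))
    rw [hXY, Matrix.trace_mul_comm] at hcs
    have hXX : (q₁ * R) * (q₁ * R)ᴴ = q₁ * D * q₁ := by
      rw [Matrix.conjTranspose_mul, hRH, hq₁herm.eq, ← hRR]; noncomm_ring
    have hYY : (R * (1 - q₂)) * (R * (1 - q₂))ᴴ = R * (1 - q₂) * R := by
      rw [Matrix.conjTranspose_mul, hRH, hp₂herm.eq, show R * (1 - q₂) * ((1 - q₂) * R)
        = R * ((1 - q₂) * (1 - q₂)) * R by noncomm_ring, hp₂idem]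
    rw [hXX, hYY] at hcs
    have htrX : (q₁ * D * q₁).trace = (D * q₁).trace := by
      rw [Matrix.trace_mul_cycle, hq₁idem, Matrix.trace_mul_comm]
    have ha : Real.sqrt ((q₁ * D * q₁).trace.re) ≤ 1 := by
      rw [htrX, h1, Complex.ofReal_re]
      calc Real.sqrt (1 - ε₁) ≤ Real.sqrt 1 := Real.sqrt_le_sqrt he₁
        _ = 1 := Real.sqrt_one
    have hb : Real.sqrt ((R * (1 - q₂) * R).trace.re) ≤ Real.sqrt ε₂ := by
      apply Real.sqrt_le_sqrt
      rw [← hq₂cycle]; exact he₂re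
    calc ‖(D * (1 - q₂) * q₁).trace‖ ≤ _ := hcs
      _ ≤ 1 * Real.sqrt ε₂ := by
          apply mul_le_mul ha hb (Real.sqrt_nonneg _) (by norm_num)
      _ = Real.sqrt ε₂ := one_mul _
  -- Cauchy-Schwarz bound for the second error term
  have ht2 : ‖(D * q₂ * q₁ * (1 - q₂)).trace‖ ≤ Real.sqrt ε₂ := by
    have hXY : ((1 - q₂) * R) * (R * (q₂ * q₁)) = (1 - q₂) * (D * q₂ * q₁) := by
      rw [← hRR]; noncomm_ring
    have hcs := aux_trace_cs ((1 - q₂) * R) (R * (q₂ * q₁))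
    rw [hXY, Matrix.trace_mul_comm] at hcs
    have hXX : ((1 - q₂) * R) * ((1 - q₂) * R)ᴴ = (1 - q₂) * D * (1 - q₂) := by
      rw [Matrix.conjTranspose_mul, hRH, hp₂herm.eq, ← hRR]; noncomm_ring
    have hYY : (R * (q₂ * q₁)) * (R * (q₂ * q₁))ᴴ = R * A * R := by
      rw [Matrix.conjTranspose_mul, Matrix.conjTranspose_mul, hRH, hq₁herm.eq, hq₂herm.eq,
        hAdef, show R * (q₂ * q₁) * (q₁ * q₂ * R) = R * (q₂ * (q₁ * q₁) * q₂) * R by noncomm_ring,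
        hq₁idem]
    rw [hXX, hYY] at hcs
    have htrX : ((1 - q₂) * D * (1 - q₂)).trace = (D * (1 - q₂)).trace := by
      rw [Matrix.trace_mul_cycle, hp₂idem, Matrix.trace_mul_comm]
    have ha : Real.sqrt (((1 - q₂) * D * (1 - q₂)).trace.re) ≤ Real.sqrt ε₂ := by
      apply Real.sqrt_le_sqrt
      rw [htrX]; exact he₂re
    have hb : Real.sqrt ((R * A * R).trace.re) ≤ 1 := by
      rw [← hScycle]
      calc Real.sqrt ((D * q₂ * q₁ * q₂).trace.re) ≤ Real.sqrt 1 := Real.sqrt_le_sqrt hS1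
        _ = 1 := Real.sqrt_one
    calc ‖(D * q₂ * q₁ * (1 - q₂)).trace‖ ≤ _ := hcs
      _ ≤ Real.sqrt ε₂ * 1 := by
          apply mul_le_mul ha hb (Real.sqrt_nonneg _) (Real.sqrt_nonneg _)
      _ = Real.sqrt ε₂ := mul_one _
  refine ⟨hSim, ?_⟩
  have hre : (D * q₂ * q₁ * q₂).trace.re
      = (1 - ε₁) - (D * (1 - q₂) * q₁).trace.re - (D * q₂ * q₁ * (1 - q₂)).trace.re := by
    rw [hdecomp, h1]
    simp [Complex.sub_re]
  have hb1 : (D * (1 - q₂) * q₁).trace.re ≤ Real.sqrt ε₂ :=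
    le_trans (Complex.re_le_norm _) ht1
  have hb2 : (D * q₂ * q₁ * (1 - q₂)).trace.re ≤ Real.sqrt ε₂ :=
    le_trans (Complex.re_le_norm _) ht2
  rw [hre]
  linarith
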